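/- Let n ≥ 1 and let T be a simple graph on 2n vertices that is a tree (connected and acyclic) with a vertex v of degree n, and suppose the chromatic symmetric function of T is Schur positive. Then T has the following 'broom' structure determined by a partition ν of n−1: every vertex of T other than v and its neighbors has degree 1 and is adjacent to a neighbor of v; equivalently, every vertex of T is at distance at most 2 from v and every vertex at distance exactly 2 from v has degree 1. (Hence T is isomorphic to the tree T(ν) in which a center v has n neighbors v₁, …, v_n and v_i has exactly ν_i additional leaf neighbors, where ν is the partition of n−1 recording the numbers of such leaves.) -/

import Mathlib

/-- A proper coloring of a simple graph: adjacent vertices get different colors. -/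
def IsProperColoring {V : Type*} (G : SimpleGraph V) (κ : V → ℕ) : Prop :=
  ∀ ⦃a b : V⦄, G.Adj a b → κ a ≠ κ b

/-- The number of proper colorings of `G` whose color-class sizes are given by `d`. -/
noncomputable def colorCount {V : Type*} [Fintype V] (G : SimpleGraph V) (d : ℕ →₀ ℕ) : ℕ :=
  Nat.card {κ : V → ℕ // IsProperColoring G κ ∧
    ∀ i : ℕ, (Finset.univ.filter fun v => κ v = i).card = d i}

/-- The number of semistandard Young tableaux of shape `μ` with content `d`. -/
noncomputable def ssytCount (μ : YoungDiagram) (d : ℕ →₀ ℕ) : ℕ :=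
  Nat.card {T : SemistandardYoungTableau μ //
    ∀ i : ℕ, (μ.cells.filter fun c => T c.1 c.2 = i).card = d i}

/-- The chromatic symmetric function of `G` is Schur positive. -/
def SchurPositive {V : Type*} [Fintype V] (G : SimpleGraph V) : Prop :=
  ∃ c : YoungDiagram →₀ ℕ,
    (∀ μ ∈ c.support, μ.card = Fintype.card V) ∧
    ∀ d : ℕ →₀ ℕ, colorCount G d = ∑ μ ∈ c.support, c μ * ssytCount μ d

open SimpleGraph Walk Finset

section Aux

variable {V : Type*} [Fintype V] [DecidableEq V]

/-! ### Finiteness and positivity of the two counts -/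

lemma color_mem_support {d : ℕ →₀ ℕ} {κ : V → ℕ}
    (h : ∀ i : ℕ, (Finset.univ.filter fun v => κ v = i).card = d i) (x : V) :
    κ x ∈ d.support := by
  rw [Finsupp.mem_support_iff, ← h (κ x)]
  have : x ∈ Finset.univ.filter fun v => κ v = κ x := by simp
  exact (Finset.card_pos.mpr ⟨x, this⟩).ne'

lemma finite_colorings (G : SimpleGraph V) (d : ℕ →₀ ℕ) :
    Finite {κ : V → ℕ // IsProperColoring G κ ∧
      ∀ i : ℕ, (Finset.univ.filter fun v => κ v = i).card = d i} := by
  have : Function.Injective (fun κ : {κ : V → ℕ // IsProperColoring G κ ∧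
      ∀ i : ℕ, (Finset.univ.filter fun v => κ v = i).card = d i} =>
      (fun x : V => (⟨κ.1 x, color_mem_support κ.2.2 x⟩ : {i : ℕ // i ∈ d.support}))) := by
    intro κ1 κ2 h
    ext x
    exact congrArg Subtype.val (congrFun h x)
  exact Finite.of_injective _ this

lemma colorCount_pos {G : SimpleGraph V} {d : ℕ →₀ ℕ} (κ : V → ℕ)
    (h1 : IsProperColoring G κ)
    (h2 : ∀ i : ℕ, (Finset.univ.filter fun v => κ v = i).card = d i) :
    0 < colorCount G d := by
  have := finite_colorings G d
  have : Nonempty {κ : V → ℕ // IsProperColoring G κ ∧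
      ∀ i : ℕ, (Finset.univ.filter fun v => κ v = i).card = d i} := ⟨⟨κ, h1, h2⟩⟩
  exact Nat.card_pos

lemma exists_coloring_of_pos {G : SimpleGraph V} {d : ℕ →₀ ℕ} (h : 0 < colorCount G d) :
    ∃ κ : V → ℕ, IsProperColoring G κ ∧
      ∀ i : ℕ, (Finset.univ.filter fun v => κ v = i).card = d i := by
  have : Nonempty {κ : V → ℕ // IsProperColoring G κ ∧
      ∀ i : ℕ, (Finset.univ.filter fun v => κ v = i).card = d i} := by
    by_contra hc
    rw [not_nonempty_iff] at hc
    rw [colorCount, Nat.card_eq_zero.mpr (Or.inl hc)] at h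
    omega
  obtain ⟨⟨κ, hk⟩⟩ := this
  exact ⟨κ, hk⟩

lemma ssyt_mem_support {μ : YoungDiagram} {d : ℕ →₀ ℕ} {T : SemistandardYoungTableau μ}
    (h : ∀ i : ℕ, (μ.cells.filter fun c => T c.1 c.2 = i).card = d i)
    {c : ℕ × ℕ} (hc : c ∈ μ.cells) : T c.1 c.2 ∈ d.support := by
  rw [Finsupp.mem_support_iff, ← h (T c.1 c.2)]
  have : c ∈ μ.cells.filter fun c' => T c'.1 c'.2 = T c.1 c.2 := by
    simp [hc]
  exact (Finset.card_pos.mpr ⟨c, this⟩).ne'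

lemma finite_ssyt (μ : YoungDiagram) (d : ℕ →₀ ℕ) :
    Finite {T : SemistandardYoungTableau μ //
      ∀ i : ℕ, (μ.cells.filter fun c => T c.1 c.2 = i).card = d i} := by
  have : Function.Injective (fun T : {T : SemistandardYoungTableau μ //
        ∀ i : ℕ, (μ.cells.filter fun c => T c.1 c.2 = i).card = d i} =>
      (fun c : μ.cells => (⟨T.1 c.1.1 c.1.2, ssyt_mem_support T.2 c.2⟩ :
        {i : ℕ // i ∈ d.support}))) := by
    intro T1 T2 h
    ext i j
    by_cases hc : (i, j) ∈ μ
    · exact congrArg Subtype.val (congrFun h ⟨(i, j), hc⟩)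
    · rw [T1.1.zeros hc, T2.1.zeros hc]
  exact Finite.of_injective _ this

lemma ssytCount_pos {μ : YoungDiagram} {d : ℕ →₀ ℕ} (T : SemistandardYoungTableau μ)
    (h : ∀ i : ℕ, (μ.cells.filter fun c => T c.1 c.2 = i).card = d i) :
    0 < ssytCount μ d := by
  have := finite_ssyt μ d
  have : Nonempty {T : SemistandardYoungTableau μ //
      ∀ i : ℕ, (μ.cells.filter fun c => T c.1 c.2 = i).card = d i} := ⟨⟨T, h⟩⟩
  exact Nat.card_pos

lemma exists_ssyt_of_pos {μ : YoungDiagram} {d : ℕ →₀ ℕ} (h : 0 < ssytCount μ d) :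
    ∃ T : SemistandardYoungTableau μ,
      ∀ i : ℕ, (μ.cells.filter fun c => T c.1 c.2 = i).card = d i := by
  have : Nonempty {T : SemistandardYoungTableau μ //
      ∀ i : ℕ, (μ.cells.filter fun c => T c.1 c.2 = i).card = d i} := by
    by_contra hc
    rw [not_nonempty_iff] at hc
    rw [ssytCount, Nat.card_eq_zero.mpr (Or.inl hc)] at h
    omega
  obtain ⟨⟨T, hT⟩⟩ := this
  exact ⟨T, hT⟩

/-- Transfer positivity of `colorCount` from one content to another through Schur positivity. -/
lemma colorCount_transfer {G : SimpleGraph V} (hpos : SchurPositive G) {d d' : ℕ →₀ ℕ}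
    (h : 0 < colorCount G d)
    (hK : ∀ μ : YoungDiagram, μ.card = Fintype.card V → 0 < ssytCount μ d →
      0 < ssytCount μ d') :
    0 < colorCount G d' := by
  obtain ⟨c, hsupp, heq⟩ := hpos
  rw [heq d] at h
  obtain ⟨μ, hμ, hterm⟩ : ∃ μ ∈ c.support, 0 < c μ * ssytCount μ d := by
    by_contra hc
    push_neg at hc
    have : ∑ μ ∈ c.support, c μ * ssytCount μ d = 0 :=
      Finset.sum_eq_zero fun μ hμ => Nat.le_zero.mp (hc μ hμ)
    omega
  have h1 : 0 < c μ := by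
    rcases Nat.eq_zero_or_pos (c μ) with h0 | h0
    · rw [h0, Nat.zero_mul] at hterm; omega
    · exact h0
  have h2 : 0 < ssytCount μ d := by
    rcases Nat.eq_zero_or_pos (ssytCount μ d) with h0 | h0
    · rw [h0, Nat.mul_zero] at hterm; omega
    · exact h0
  have h3 : 0 < ssytCount μ d' := hK μ (hsupp μ hμ) h2
  rw [heq d']
  calc 0 < c μ * ssytCount μ d' := Nat.mul_pos h1 h3
    _ ≤ ∑ μ ∈ c.support, c μ * ssytCount μ d' :=
      Finset.single_le_sum (f := fun μ => c μ * ssytCount μ d') (fun _ _ => Nat.zero_le _) hμ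

end Aux

section Young

variable {μ : YoungDiagram} {d : ℕ →₀ ℕ}

lemma ssyt_entry_small (hd : ∀ i, 2 ≤ i → d i = 0) {T : SemistandardYoungTableau μ}
    (hT : ∀ i : ℕ, (μ.cells.filter fun c => T c.1 c.2 = i).card = d i)
    {i j : ℕ} (hij : (i, j) ∈ μ) : T i j ≤ 1 := by
  by_contra hgt
  have h1 : T i j ∈ d.support := ssyt_mem_support hT (c := (i, j)) hij
  rw [Finsupp.mem_support_iff] at h1
  exact h1 (hd _ (by omega))

lemma ssyt_row_le_one (hd : ∀ i, 2 ≤ i → d i = 0) {T : SemistandardYoungTableau μ}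
    (hT : ∀ i : ℕ, (μ.cells.filter fun c => T c.1 c.2 = i).card = d i)
    {i j : ℕ} (hij : (i, j) ∈ μ) : i ≤ 1 := by
  by_contra hgt
  push_neg at hgt
  have h2 : (2, j) ∈ μ := μ.up_left_mem (by omega) le_rfl hij
  have h1 : (1, j) ∈ μ := μ.up_left_mem (by omega) le_rfl hij
  have e1 : T 1 j < T 2 j := T.col_strict (by omega) h2
  have e0 : T 0 j < T 1 j := T.col_strict (by omega) h1
  have := ssyt_entry_small hd hT h2
  omega

lemma rowLen_one_le (hd : ∀ i, 2 ≤ i → d i = 0) {T : SemistandardYoungTableau μ}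
    (hT : ∀ i : ℕ, (μ.cells.filter fun c => T c.1 c.2 = i).card = d i) :
    μ.rowLen 1 ≤ d 1 := by
  rw [← hT 1, μ.rowLen_eq_card]
  apply Finset.card_le_card
  intro c hc
  rw [YoungDiagram.mem_row_iff] at hc
  obtain ⟨hcm, hc1⟩ := hc
  rw [Finset.mem_filter]
  refine ⟨hcm, ?_⟩
  obtain ⟨i, j⟩ := c
  have hi : i = 1 := hc1
  subst hi
  show T 1 j = 1
  have h0 : T 0 j < T 1 j := T.col_strict (by omega) hcm
  have := ssyt_entry_small hd hT hcm
  omega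

lemma card_split (h2 : ∀ {i j : ℕ}, (i, j) ∈ μ → i ≤ 1) :
    μ.card = μ.rowLen 0 + μ.rowLen 1 := by
  classical
  have hcells : μ.cells = μ.row 0 ∪ μ.row 1 := by
    ext c
    simp only [Finset.mem_union, YoungDiagram.mem_row_iff]
    constructor
    · intro hc
      have h1 : c.1 ≤ 1 := h2 (i := c.1) (j := c.2) hc
      rcases Nat.lt_or_ge c.1 1 with h | h
      · exact Or.inl ⟨hc, by omega⟩
      · exact Or.inr ⟨hc, by omega⟩
    · rintro (⟨hc, _⟩ | ⟨hc, _⟩) <;> exact hc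
  have hdisj : Disjoint (μ.row 0) (μ.row 1) := by
    rw [Finset.disjoint_left]
    intro c hc0 hc1
    rw [YoungDiagram.mem_row_iff] at hc0 hc1
    omega
  rw [YoungDiagram.card, hcells, Finset.card_union_of_disjoint hdisj,
    μ.rowLen_eq_card, μ.rowLen_eq_card]

end Young

section Construct

def twoRowEntry (μ : YoungDiagram) (n : ℕ) : ℕ → ℕ → ℕ := fun i j =>
  if (i, j) ∈ μ.cells then (if 1 ≤ i then 1 else if j < n then 0 else 1) else 0

lemma twoRowEntry_le_one {μ : YoungDiagram} {n i j : ℕ} : twoRowEntry μ n i j ≤ 1 := by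
  unfold twoRowEntry
  split_ifs <;> omega

lemma exists_ssyt_two_rows {μ : YoungDiagram} (n : ℕ)
    (h2 : ∀ {i j : ℕ}, (i, j) ∈ μ → i ≤ 1)
    (hlen : μ.rowLen 1 ≤ n) (hcard : μ.card = 2 * n) :
    ∃ T : SemistandardYoungTableau μ,
      ∀ i : ℕ, (μ.cells.filter fun c => T c.1 c.2 = i).card
        = (Finsupp.single 0 n + Finsupp.single 1 n : ℕ →₀ ℕ) i := by
  have hr0 : n ≤ μ.rowLen 0 := by
    have := card_split h2
    omega
  refine ⟨⟨twoRowEntry μ n, ?_, ?_, ?_⟩, ?_⟩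
  · -- row_weak'
    intro i j1 j2 hj hc2
    have hc1 : (i, j1) ∈ μ := μ.up_left_mem le_rfl (le_of_lt hj) hc2
    unfold twoRowEntry
    rw [if_pos ((YoungDiagram.mem_cells _).mpr hc1), if_pos ((YoungDiagram.mem_cells _).mpr hc2)]
    split_ifs <;> omega
  · -- col_strict'
    intro i1 i2 j hi hc2
    have hi2 : i2 = 1 := by have := h2 hc2; omega
    have hi1 : i1 = 0 := by omega
    subst hi2; subst hi1
    have hc1 : (0, j) ∈ μ := μ.up_left_mem (by omega) le_rfl hc2
    have hjn : j < n := by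
      have := YoungDiagram.mem_iff_lt_rowLen.mp hc2
      omega
    unfold twoRowEntry
    rw [if_pos ((YoungDiagram.mem_cells _).mpr hc1), if_pos ((YoungDiagram.mem_cells _).mpr hc2)]
    simp [hjn]
  · -- zeros'
    intro i j hij
    exact if_neg (fun hc => hij ((YoungDiagram.mem_cells _).mp hc))
  · -- content
    intro i
    show (μ.cells.filter fun c => twoRowEntry μ n c.1 c.2 = i).card = _
    have hfilter0 : (μ.cells.filter fun c => twoRowEntry μ n c.1 c.2 = 0)
        = (Finset.range n).image fun j => ((0, j) : ℕ × ℕ) := by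
      ext c
      simp only [Finset.mem_filter, Finset.mem_image, Finset.mem_range]
      constructor
      · rintro ⟨hc, he⟩
        obtain ⟨c1, c2⟩ := c
        unfold twoRowEntry at he
        rw [if_pos hc] at he
        split_ifs at he with h h'
        all_goals try exact absurd he (by omega)
        have hc1 : c1 = 0 := by omega
        subst hc1
        exact ⟨c2, by assumption, rfl⟩
      · rintro ⟨j, hj, rfl⟩
        have hc : ((0 : ℕ), j) ∈ μ.cells := by
          rw [YoungDiagram.mem_cells, YoungDiagram.mem_iff_lt_rowLen]
          omega
        refine ⟨hc, ?_⟩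
        unfold twoRowEntry
        rw [if_pos hc]
        simp [hj]
    have hcard0 : (μ.cells.filter fun c => twoRowEntry μ n c.1 c.2 = 0).card = n := by
      rw [hfilter0, Finset.card_image_of_injective _ (fun a b h => congrArg Prod.snd h), Finset.card_range]
    have hsplit := Finset.card_filter_add_card_filter_not
      (s := μ.cells) (p := fun c => twoRowEntry μ n c.1 c.2 = 0)
    have hfilter1 : (μ.cells.filter fun c => ¬ twoRowEntry μ n c.1 c.2 = 0)
        = μ.cells.filter fun c => twoRowEntry μ n c.1 c.2 = 1 := by
      ext c
      simp only [Finset.mem_filter]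
      have : twoRowEntry μ n c.1 c.2 ≤ 1 := twoRowEntry_le_one
      constructor
      · rintro ⟨hc, he⟩; exact ⟨hc, by omega⟩
      · rintro ⟨hc, he⟩; exact ⟨hc, by omega⟩
    have hcard1 : (μ.cells.filter fun c => twoRowEntry μ n c.1 c.2 = 1).card = n := by
      rw [← hfilter1]
      have : μ.cells.card = 2 * n := hcard
      omega
    rcases Nat.lt_or_ge i 2 with hi | hi
    · interval_cases i
      · rw [hcard0]
        simp [Finsupp.single_apply]
      · rw [hcard1]
        simp [Finsupp.single_apply]
    · have hempty : (μ.cells.filter fun c => twoRowEntry μ n c.1 c.2 = i) = ∅ := by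
        apply Finset.filter_false_of_mem
        intro c hc
        have : twoRowEntry μ n c.1 c.2 ≤ 1 := twoRowEntry_le_one
        omega
      rw [hempty]
      simp only [Finset.card_empty, Finsupp.add_apply, Finsupp.single_apply]
      rw [if_neg (by omega : ¬ (0 : ℕ) = i), if_neg (by omega : ¬ (1 : ℕ) = i)]
      omega

end Construct

section Tree

variable {W : Type*} {G : SimpleGraph W}

lemma path_concat_isPath {u v w : W} {p : G.Walk u v} (hp : p.IsPath) (h : G.Adj v w)
    (hw : w ∉ p.support) : (p.concat h).IsPath := by
  apply SimpleGraph.Walk.IsPath.mk'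
  rw [Walk.support_concat]
  simp [List.concat_eq_append, List.nodup_append, hp.support_nodup, hw]
  intro a ha hEq
  exact hw (hEq ▸ ha)

lemma tree_adj_length [DecidableEq W] (v : W)
    (f : ∀ x, G.Walk v x) (hf : ∀ x, (f x).IsPath)
    (hf' : ∀ x (q : G.Walk v x), q.IsPath → q = f x)
    {x y : W} (hxy : G.Adj x y) :
    (f y).length = (f x).length + 1 ∨ (f x).length = (f y).length + 1 := by
  by_cases hy : y ∈ (f x).support
  · right
    have hyx : y ≠ x := hxy.ne'
    set q := (f x).takeUntil y hy with hq
    have hqp : q.IsPath := (hf x).takeUntil hy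
    have hxq : x ∉ q.support := by
      intro hxq
      have hspec := (f x).take_spec hy
      have hnd := (hf x).support_nodup
      rw [← hspec] at hnd
      rw [Walk.support_append] at hnd
      have hxd : x ∈ ((f x).dropUntil y hy).support.tail := by
        have hxd' : x ∈ ((f x).dropUntil y hy).support := Walk.end_mem_support _
        rw [Walk.support_eq_cons ((f x).dropUntil y hy), List.mem_cons] at hxd'
        exact hxd'.resolve_left (fun h => absurd h.symm hyx)
      exact (List.disjoint_of_nodup_append hnd) hxq hxd
    have : q.concat hxy.symm = f x := hf' x _ (path_concat_isPath hqp hxy.symm hxq)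
    rw [← this, Walk.length_concat, hf' y q hqp]
  · left
    have : (f x).concat hxy = f y := hf' y _ (path_concat_isPath (hf x) hxy hy)
    rw [← this, Walk.length_concat]

lemma exists_two_coloring [DecidableEq W] (htree : G.IsTree) :
    ∃ κ : W → ℕ, IsProperColoring G κ ∧ ∀ x, κ x ≤ 1 := by
  have hne : Nonempty W := htree.isConnected.nonempty
  obtain ⟨v⟩ := hne
  have h := fun x => htree.existsUnique_path v x
  choose f hf using fun x => (h x).exists
  have hf' : ∀ x (q : G.Walk v x), q.IsPath → q = f x := fun x q hq =>
    (h x).unique hq (hf x)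
  refine ⟨fun x => (f x).length % 2, ?_, fun x => by show (f x).length % 2 ≤ 1; omega⟩
  intro a b hab hEq
  rcases tree_adj_length v f hf hf' hab with h1 | h1 <;> simp only at hEq <;> omega

end Tree

lemma pair_apply (a b i : ℕ) :
    (Finsupp.single 0 a + Finsupp.single 1 b : ℕ →₀ ℕ) i
      = if i = 0 then a else if i = 1 then b else 0 := by
  rw [Finsupp.add_apply, Finsupp.single_apply, Finsupp.single_apply]
  split_ifs <;> omega

/-- If the chromatic symmetric function of a tree `T` on `2n` vertices with a vertex `v`
of degree `n` is Schur positive, then `T` is a "broom": every vertex other than `v` and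
its neighbors is a leaf adjacent to a neighbor of `v`.  (Hence `T ≅ T(ν)` for some
partition `ν` of `n - 1`.) -/
theorem broom_of_schurPositive
    {V : Type*} [Fintype V] [DecidableEq V]
    {n : ℕ} (hn : 1 ≤ n)
    (T : SimpleGraph V) [DecidableRel T.Adj]
    (hcard : Fintype.card V = 2 * n) (htree : T.IsTree)
    (v : V) (hdeg : T.degree v = n)
    (hpos : SchurPositive T) :
    ∀ x : V, x ≠ v → ¬ T.Adj v x →
      T.degree x = 1 ∧ ∃ w : V, T.Adj v w ∧ T.Adj w x := by

  classical
  obtain ⟨κ0, hκ0p, hκ0le⟩ := exists_two_coloring htree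
  set a0 := (Finset.univ.filter fun x => κ0 x = 0).card with ha0
  set b0 := (Finset.univ.filter fun x => κ0 x = 1).card with hb0
  have hab : a0 + b0 = 2 * n := by
    have hsplit := Finset.card_filter_add_card_filter_not
      (s := (Finset.univ : Finset V)) (p := fun x => κ0 x = 0)
    have heq1 : (Finset.univ.filter fun x => ¬ κ0 x = 0)
        = Finset.univ.filter fun x => κ0 x = 1 := by
      ext x
      simp only [Finset.mem_filter, Finset.mem_univ, true_and]
      have := hκ0le x
      omega
    rw [heq1] at hsplit
    rw [Finset.card_univ, hcard] at hsplit
    exact hsplit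
  obtain ⟨κ1, hp1, d1, hcont, hd1, hd2⟩ :
      ∃ (κ1 : V → ℕ), IsProperColoring T κ1 ∧ ∃ d1 : ℕ →₀ ℕ,
        (∀ i : ℕ, (Finset.univ.filter fun x => κ1 x = i).card = d1 i) ∧
        d1 1 ≤ n ∧ (∀ i, 2 ≤ i → d1 i = 0) := by
    rcases le_or_gt b0 n with hb | hb
    · refine ⟨κ0, hκ0p, Finsupp.single 0 a0 + Finsupp.single 1 b0, ?_, ?_, ?_⟩
      · intro i
        rw [pair_apply]
        split_ifs with h h
        · subst h; rfl
        · subst h; rfl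
        · rw [Finset.card_eq_zero]
          apply Finset.filter_false_of_mem
          intro x _
          have := hκ0le x
          omega
      · rw [pair_apply]; simpa using hb
      · intro i hi
        rw [pair_apply, if_neg (by omega), if_neg (by omega)]
    · refine ⟨fun x => 1 - κ0 x, ?_, Finsupp.single 0 b0 + Finsupp.single 1 a0,
        ?_, ?_, ?_⟩
      · intro x y hxy h
        have h1 := hκ0p hxy
        have h2 := hκ0le x
        have h3 := hκ0le y
        simp only at h
        omega
      · intro i
        rw [pair_apply]
        split_ifs with h h
        · subst h
          rw [hb0]
          congr 1
          ext x
          simp only [Finset.mem_filter, Finset.mem_univ, true_and]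
          have := hκ0le x
          omega
        · subst h
          rw [ha0]
          congr 1
          ext x
          simp only [Finset.mem_filter, Finset.mem_univ, true_and]
          have := hκ0le x
          omega
        · rw [Finset.card_eq_zero]
          apply Finset.filter_false_of_mem
          intro x _
          show ¬ (1 - κ0 x = i)
          have := hκ0le x
          omega
      · rw [pair_apply]
        simp only [if_neg one_ne_zero]
        simpa using by omega
      · intro i hi
        rw [pair_apply, if_neg (by omega), if_neg (by omega)]
  have h0 : 0 < colorCount T d1 := colorCount_pos κ1 hp1 hcont
  have h1 : 0 < colorCount T (Finsupp.single 0 n + Finsupp.single 1 n) := by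
    refine colorCount_transfer hpos h0 ?_
    intro μ hμcard hsp
    obtain ⟨T0, hT0⟩ := exists_ssyt_of_pos hsp
    have h2 : ∀ {i j : ℕ}, (i, j) ∈ μ → i ≤ 1 := fun hij => ssyt_row_le_one hd2 hT0 hij
    have hlen : μ.rowLen 1 ≤ n := le_trans (rowLen_one_le hd2 hT0) hd1
    have hc2n : μ.card = 2 * n := by rw [hμcard, hcard]
    obtain ⟨T1, hT1⟩ := exists_ssyt_two_rows n h2 hlen hc2n
    exact ssytCount_pos T1 hT1
  obtain ⟨κ, hκp, hκc⟩ := exists_coloring_of_pos h1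
  have hκle : ∀ x, κ x ≤ 1 := by
    intro x
    by_contra hx
    push_neg at hx
    have h := hκc (κ x)
    rw [pair_apply, if_neg (by omega), if_neg (by omega)] at h
    have hxm : x ∈ Finset.univ.filter fun y => κ y = κ x := by simp
    have := Finset.card_pos.mpr ⟨x, hxm⟩
    omega
  have hc0 : (Finset.univ.filter fun x => κ x = 0).card = n := by
    have := hκc 0
    rwa [pair_apply, if_pos rfl] at this
  have hc1 : (Finset.univ.filter fun x => κ x = 1).card = n := by
    have := hκc 1
    rwa [pair_apply, if_neg one_ne_zero, if_pos rfl] at this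
  set cv := κ v with hcv
  have hcvle : cv ≤ 1 := hκle v
  have hfc : (Finset.univ.filter fun x => κ x = 1 - cv).card = n := by
    rcases Nat.eq_zero_or_pos cv with h | h
    · rw [h]; exact hc1
    · have : cv = 1 := by omega
      rw [this]; exact hc0
  have hNsub : T.neighborFinset v ⊆ Finset.univ.filter fun x => κ x = 1 - cv := by
    intro w hw
    rw [SimpleGraph.mem_neighborFinset] at hw
    have h1 := hκp hw
    have h2 := hκle w
    simp only [Finset.mem_filter, Finset.mem_univ, true_and]
    omega
  have hN : T.neighborFinset v = Finset.univ.filter fun x => κ x = 1 - cv := by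
    apply Finset.eq_of_subset_of_card_le hNsub
    rw [hfc, SimpleGraph.card_neighborFinset_eq_degree, hdeg]
  intro x hxv hxadj
  have hκx : κ x = cv := by
    by_contra hne
    have hx1 : κ x = 1 - cv := by have := hκle x; omega
    have hx2 : x ∈ T.neighborFinset v := by
      rw [hN]
      simp [hx1]
    rw [SimpleGraph.mem_neighborFinset] at hx2
    exact hxadj hx2
  have hnbr : ∀ w, T.Adj x w → T.Adj v w := by
    intro w hw
    have h1 := hκp hw
    have h2 := hκle w
    have : w ∈ T.neighborFinset v := by
      rw [hN]
      simp only [Finset.mem_filter, Finset.mem_univ, true_and]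
      omega
    rwa [SimpleGraph.mem_neighborFinset] at this
  obtain ⟨w0, hadj⟩ : ∃ w, T.Adj x w := by
    obtain ⟨p⟩ := htree.isConnected.preconnected x v
    cases p with
    | nil => exact absurd rfl hxv
    | cons h q => exact ⟨_, h⟩
  have hvw0 : T.Adj v w0 := hnbr w0 hadj
  constructor
  · rw [← SimpleGraph.card_neighborFinset_eq_degree, Finset.card_eq_one]
    refine ⟨w0, ?_⟩
    ext w
    rw [SimpleGraph.mem_neighborFinset, Finset.mem_singleton]
    constructor
    · intro hw
      have hvw : T.Adj v w := hnbr w hw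
      have hp1 : (SimpleGraph.Walk.cons hw (SimpleGraph.Walk.cons hvw.symm
          SimpleGraph.Walk.nil)).IsPath := by
        simp only [SimpleGraph.Walk.isPath_def, SimpleGraph.Walk.support_cons,
          SimpleGraph.Walk.support_nil]
        simp [hw.ne, hxv, hvw.ne']
      have hp2 : (SimpleGraph.Walk.cons hadj (SimpleGraph.Walk.cons hvw0.symm
          SimpleGraph.Walk.nil)).IsPath := by
        simp only [SimpleGraph.Walk.isPath_def, SimpleGraph.Walk.support_cons,
          SimpleGraph.Walk.support_nil]
        simp [hadj.ne, hxv, hvw0.ne']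
      have huniq := (htree.existsUnique_path x v).unique hp1 hp2
      have := congrArg (fun q => q.getVert 1) huniq
      simpa using this
    · rintro rfl
      exact hadj
  · exact ⟨w0, hvw0, hadj.symm⟩
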